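/- arXiv:2508.10153 — 2 statements merged into one kernel-verified Lean document; each statement's English description precedes it below -/
import Mathlib

section
/- For any odd A, B ∈ F₂[[q]], the parity vector map PV_{A,B} : F₂[[q]] → ℤ₂ is a bijection and satisfies PV_{A,B} ∘ T_{A,B} = σ ∘ PV_{A,B}, where σ is the shift map on ℤ₂; hence T_{A,B} is conjugate to the shift map via PV_{A,B}. -/
open PowerSeries
open scoped Classical

/-- Shift map on `F₂[[q]]`: equals `x / q` whenever `q ∣ x`. -/
noncomputable def divq (x : PowerSeries (ZMod 2)) : PowerSeries (ZMod 2) :=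
  PowerSeries.mk fun n => PowerSeries.coeff (n + 1) x

/-- `T_{A,B}(x) = x/q` if `q ∣ x`, and `(A*x + B)/q` otherwise.  (When `A`, `B`, `x` are
all odd, `A*x + B` is divisible by `q`, so `divq` computes the true quotient there.) -/
noncomputable def Tab (A B x : PowerSeries (ZMod 2)) : PowerSeries (ZMod 2) :=
  if X ∣ x then divq x else divq (A * x + B)
/-- `half x` is the unique `y` with `x = 2 * y`, when `2 ∣ x` (and `0` otherwise). -/
noncomputable def half (x : ℤ_[2]) : ℤ_[2] :=
  if h : (2 : ℤ_[2]) ∣ x then h.choose else 0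

/-- The `3x+1` map `T : ℤ₂ → ℤ₂`: `x/2` if `x` is even, `(3x+1)/2` if `x` is odd. -/
noncomputable def T3x1 (x : ℤ_[2]) : ℤ_[2] :=
  if (2 : ℤ_[2]) ∣ x then half x else half (3 * x + 1)

/-- The shift map `σ : ℤ₂ → ℤ₂`: `x/2` if `x` is even, `(x-1)/2` if `x` is odd. -/
noncomputable def shiftZ (x : ℤ_[2]) : ℤ_[2] :=
  if (2 : ℤ_[2]) ∣ x then half x else half (x - 1)

/-- The parity vector `PV_{A,B}(x) = Σ_k x_k 2^k ∈ ℤ₂`, where `x_k ∈ {0,1}` is the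
parity (constant coefficient) of `T_{A,B}^k(x)`. -/
noncomputable def PV (A B x : PowerSeries (ZMod 2)) : ℤ_[2] :=
  ∑' k : ℕ, ((PowerSeries.constantCoeff ((Tab A B)^[k] x)).val : ℤ_[2]) * 2 ^ k

/-! ### Auxiliary lemmas: the 2-adic side -/

lemma PVaux.cast2 : ((2:ℕ):ℤ_[2]) = 2 := by norm_num

lemma PVaux.two_ne_zero : (2 : ℤ_[2]) ≠ 0 := by
  intro h
  have h2 : ‖(2 : ℤ_[2])‖ = 2⁻¹ := by
    have := PadicInt.norm_p (p := 2)
    rwa [PVaux.cast2] at this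
  rw [h] at h2
  norm_num at h2

lemma PVaux.half_two_mul (t : ℤ_[2]) : half (2 * t) = t := by
  have h : (2:ℤ_[2]) ∣ 2 * t := ⟨t, rfl⟩
  rw [half, dif_pos h]
  exact mul_left_cancel₀ PVaux.two_ne_zero h.choose_spec.symm

lemma PVaux.not_two_dvd_one : ¬ (2:ℤ_[2]) ∣ 1 := by
  intro h
  have := (PadicInt.norm_lt_one_iff_dvd (p := 2) 1).2 (by rwa [PVaux.cast2])
  norm_num at this

lemma PVaux.zmod2_cases (v : ZMod 2) : v = 0 ∨ v = 1 := by revert v; decide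

lemma PVaux.shift_decomp (v : ZMod 2) (t : ℤ_[2]) :
    shiftZ ((v.val : ℤ_[2]) + 2 * t) = t ∧
    PadicInt.toZMod ((v.val : ℤ_[2]) + 2 * t) = v := by
  constructor
  · rcases PVaux.zmod2_cases v with hv | hv <;> subst hv
    · have h0 : ((0:ZMod 2).val : ℤ_[2]) + 2 * t = 2 * t := by
        norm_num [ZMod.val]
      rw [h0]
      have h : (2:ℤ_[2]) ∣ 2 * t := ⟨t, rfl⟩
      rw [shiftZ, if_pos h, PVaux.half_two_mul]
    · have hv1 : ((1:ZMod 2).val : ℤ_[2]) + 2 * t = 1 + 2 * t := by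
        rw [show (1:ZMod 2).val = 1 from rfl, Nat.cast_one]
      rw [hv1]
      have h : ¬ (2:ℤ_[2]) ∣ 1 + 2 * t := by
        intro h
        have h2 : (2:ℤ_[2]) ∣ 2 * t := ⟨t, rfl⟩
        have h3 := dvd_sub h h2
        simp only [add_sub_cancel_right] at h3
        exact PVaux.not_two_dvd_one h3
      rw [shiftZ, if_neg h]
      have : 1 + 2 * t - 1 = 2 * t := by ring
      rw [this, PVaux.half_two_mul]
  · have h2 : PadicInt.toZMod (2 : ℤ_[2]) = 0 := by
      have := map_natCast (PadicInt.toZMod (p := 2)) 2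
      rw [PVaux.cast2] at this
      rw [this]; decide
    rw [map_add, map_mul, h2, zero_mul, add_zero, map_natCast]
    rw [ZMod.natCast_val, ZMod.cast_id]

lemma PVaux.decomp (w : ℤ_[2]) :
    w = ((PadicInt.toZMod w).val : ℤ_[2]) + 2 * shiftZ w := by
  have hspec := PadicInt.toZMod_spec w
  rw [PadicInt.maximalIdeal_eq_span_p, Ideal.mem_span_singleton] at hspec
  rw [← ZMod.natCast_val, PVaux.cast2] at hspec
  obtain ⟨c, hc⟩ := hspec
  have hw : w = ((PadicInt.toZMod w).val : ℤ_[2]) + 2 * c := by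
    linear_combination hc
  rw [hw, (PVaux.shift_decomp _ c).2, (PVaux.shift_decomp _ c).1]

noncomputable def PVaux.Ssum (ε : ℕ → ZMod 2) : ℤ_[2] :=
  ∑' k : ℕ, (((ε k).val : ℤ_[2]) * 2 ^ k)

lemma PVaux.norm_le (a : ℕ) (k : ℕ) : ‖((a : ℤ_[2]) * 2 ^ k)‖ ≤ (2⁻¹ : ℝ) ^ k := by
  rw [norm_mul]
  calc ‖(a : ℤ_[2])‖ * ‖(2:ℤ_[2]) ^ k‖ ≤ 1 * ‖(2:ℤ_[2]) ^ k‖ := by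
        gcongr; exact PadicInt.norm_le_one _
    _ = ‖(2:ℤ_[2])‖ ^ k := by rw [one_mul, norm_pow]
    _ = (2⁻¹ : ℝ) ^ k := by
        have := PadicInt.norm_p (p := 2); rw [PVaux.cast2] at this
        rw [this]; norm_num

lemma PVaux.summable_S (f : ℕ → ℕ) : Summable (fun k => ((f k : ℤ_[2]) * 2 ^ k)) := by
  apply Summable.of_norm_bounded (g := fun k => (2⁻¹ : ℝ) ^ k)
    (summable_geometric_of_lt_one (by norm_num) (by norm_num))
  exact fun k => PVaux.norm_le (f k) k

lemma PVaux.Ssum_decomp (ε : ℕ → ZMod 2) :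
    PVaux.Ssum ε = ((ε 0).val : ℤ_[2]) + 2 * PVaux.Ssum (fun k => ε (k + 1)) := by
  rw [PVaux.Ssum, Summable.tsum_eq_zero_add (PVaux.summable_S fun k => (ε k).val)]
  simp only [pow_zero, mul_one]
  congr 1
  calc ∑' k : ℕ, (((ε (k+1)).val : ℤ_[2]) * 2 ^ (k+1))
      = ∑' k : ℕ, 2 * (((ε (k+1)).val : ℤ_[2]) * 2 ^ k) := by
        apply tsum_congr; intro k; ring
    _ = 2 * PVaux.Ssum (fun k => ε (k+1)) :=
        Summable.tsum_mul_left 2 (PVaux.summable_S fun k => (ε (k+1)).val)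

lemma PVaux.toZMod_Ssum (ε : ℕ → ZMod 2) : PadicInt.toZMod (PVaux.Ssum ε) = ε 0 := by
  rw [PVaux.Ssum_decomp]; exact (PVaux.shift_decomp _ _).2

lemma PVaux.shiftZ_Ssum (ε : ℕ → ZMod 2) :
    shiftZ (PVaux.Ssum ε) = PVaux.Ssum (fun k => ε (k + 1)) := by
  rw [PVaux.Ssum_decomp]; exact (PVaux.shift_decomp _ _).1

lemma PVaux.extract (ε : ℕ → ZMod 2) (n : ℕ) :
    PadicInt.toZMod (shiftZ^[n] (PVaux.Ssum ε)) = ε n := by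
  induction n generalizing ε with
  | zero => exact PVaux.toZMod_Ssum ε
  | succ n ih =>
    rw [Function.iterate_succ_apply, PVaux.shiftZ_Ssum]
    exact ih _

lemma PVaux.Ssum_digits (z : ℤ_[2]) :
    PVaux.Ssum (fun n => PadicInt.toZMod (shiftZ^[n] z)) = z := by
  set f : ℕ → ℤ_[2] := fun k => ((PadicInt.toZMod (shiftZ^[k] z)).val : ℤ_[2]) * 2 ^ k with hf
  have hpart : ∀ n, z - ∑ k ∈ Finset.range n, f k = 2 ^ n * shiftZ^[n] z := by
    intro n
    induction n with
    | zero => simp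
    | succ n ih =>
      rw [Finset.sum_range_succ, show z - (∑ k ∈ Finset.range n, f k + f n)
        = (z - ∑ k ∈ Finset.range n, f k) - f n by ring, ih,
        Function.iterate_succ_apply']
      have hdec := PVaux.decomp (shiftZ^[n] z)
      rw [hf]
      linear_combination ((2:ℤ_[2]) ^ n) * hdec
  have hsum : Summable f := PVaux.summable_S _
  have h1 : Filter.Tendsto (fun n => ∑ k ∈ Finset.range n, f k)
      Filter.atTop (nhds (PVaux.Ssum fun n => PadicInt.toZMod (shiftZ^[n] z))) :=
    hsum.hasSum.tendsto_sum_nat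
  have h2 : Filter.Tendsto (fun n => ∑ k ∈ Finset.range n, f k)
      Filter.atTop (nhds z) := by
    rw [tendsto_iff_norm_sub_tendsto_zero]
    apply squeeze_zero (fun n => norm_nonneg _) (g := fun n => (2⁻¹ : ℝ) ^ n)
    · intro n
      have : ∑ k ∈ Finset.range n, f k - z = -(2 ^ n * shiftZ^[n] z) := by
        rw [← hpart n]; ring
      rw [this, norm_neg, norm_mul, norm_pow]
      have h2n : ‖(2:ℤ_[2])‖ = 2⁻¹ := by
        have := PadicInt.norm_p (p := 2); rwa [PVaux.cast2] at this
      rw [h2n]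
      calc (2⁻¹:ℝ) ^ n * ‖shiftZ^[n] z‖ ≤ (2⁻¹:ℝ) ^ n * 1 := by
            gcongr; exact PadicInt.norm_le_one _
        _ = (2⁻¹:ℝ) ^ n := mul_one _
    · exact tendsto_pow_atTop_nhds_zero_of_lt_one (by norm_num) (by norm_num)
  exact tendsto_nhds_unique h1 h2

/-! ### Auxiliary lemmas: the power series side -/

lemma PVaux.coeff_divq (x : PowerSeries (ZMod 2)) (n : ℕ) :
    coeff n (divq x) = coeff (n + 1) x := by
  rw [divq, coeff_mk]

lemma PVaux.divq_add (x y : PowerSeries (ZMod 2)) : divq (x + y) = divq x + divq y := by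
  ext n
  simp [PVaux.coeff_divq, map_add]

lemma PVaux.zmod2_add_self (a : ZMod 2) : a + a = 0 := CharTwo.add_self_eq_zero a

lemma PVaux.zmod2_of_add_eq_zero {a b : ZMod 2} (h : a + b = 0) : a = b := by
  have := eq_neg_of_add_eq_zero_left h
  rwa [CharTwo.neg_eq] at this

lemma PVaux.ps_add_self (w : PowerSeries (ZMod 2)) : w + w = 0 := by
  ext n
  simp [map_add, PVaux.zmod2_add_self]

lemma PVaux.Tab_add (A B : PowerSeries (ZMod 2)) (hA : constantCoeff A = 1)
    {x y : PowerSeries (ZMod 2)}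
    (hxy : constantCoeff x = constantCoeff y) :
    ∃ C : PowerSeries (ZMod 2), constantCoeff C = 1 ∧
      Tab A B x + Tab A B y = divq (C * (x + y)) := by
  by_cases h : (X : PowerSeries (ZMod 2)) ∣ x
  · have hy : (X : PowerSeries (ZMod 2)) ∣ y := by
      rw [X_dvd_iff] at h ⊢; rwa [← hxy]
    exact ⟨1, by simp, by rw [Tab, Tab, if_pos h, if_pos hy, ← PVaux.divq_add, one_mul]⟩
  · have hy : ¬ (X : PowerSeries (ZMod 2)) ∣ y := by
      rw [X_dvd_iff] at h ⊢; rwa [← hxy]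
    refine ⟨A, hA, ?_⟩
    rw [Tab, Tab, if_neg h, if_neg hy, ← PVaux.divq_add]
    exact congrArg divq (by linear_combination PVaux.ps_add_self B)

lemma PVaux.master (A B : PowerSeries (ZMod 2)) (hA : constantCoeff A = 1) :
    ∀ n (x y : PowerSeries (ZMod 2)),
      (∀ i, i < n → coeff i (x + y) = 0) →
      constantCoeff ((Tab A B)^[n] x) + constantCoeff ((Tab A B)^[n] y)
        = coeff n (x + y) := by
  intro n
  induction n with
  | zero =>
    intro x y _
    simp [Function.iterate_zero, ← coeff_zero_eq_constantCoeff, map_add]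
  | succ n ih =>
    intro x y hc
    have h0 : constantCoeff x = constantCoeff y := by
      apply PVaux.zmod2_of_add_eq_zero
      have := hc 0 (Nat.succ_pos n)
      rwa [map_add, coeff_zero_eq_constantCoeff] at this
    obtain ⟨C, hC1, hC⟩ := PVaux.Tab_add A B hA h0
    have key : ∀ j, coeff j (Tab A B x + Tab A B y)
        = coeff (j + 1) (C * (x + y)) := by
      intro j; rw [hC, PVaux.coeff_divq]
    have hsmall : ∀ i, i < n → coeff i (Tab A B x + Tab A B y) = 0 := by
      intro i hi
      rw [key i, coeff_mul]
      apply Finset.sum_eq_zero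
      rintro ⟨a, b⟩ hab
      rw [Finset.HasAntidiagonal.mem_antidiagonal] at hab
      have hb : b < n + 1 := by omega
      rw [hc b hb, mul_zero]
    have hIH := ih (Tab A B x) (Tab A B y) hsmall
    rw [Function.iterate_succ_apply, Function.iterate_succ_apply, hIH, key n, coeff_mul]
    rw [Finset.sum_eq_single_of_mem ((0 : ℕ), n + 1)]
    · show coeff 0 C * coeff (n + 1) (x + y) = coeff (n + 1) (x + y)
      rw [coeff_zero_eq_constantCoeff, hC1, one_mul]
    · rw [Finset.HasAntidiagonal.mem_antidiagonal]; simp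
    · rintro ⟨a, b⟩ hab hne
      rw [Finset.HasAntidiagonal.mem_antidiagonal] at hab
      have hb : b < n + 1 := by
        rcases Nat.lt_or_ge b (n + 1) with h | h
        · exact h
        · exfalso; apply hne
          have hb' : b = n + 1 := by omega
          have ha' : a = 0 := by omega
          rw [ha', hb']
      rw [hc b hb, mul_zero]

/-- The inverse construction: `gfun A B d` is the coefficient sequence of the unique
power series whose parity vector has digit sequence `d`. -/
noncomputable def PVaux.gfun (A B : PowerSeries (ZMod 2)) (d : ℕ → ZMod 2) : ℕ → ZMod 2
  | n => d n + PowerSeries.constantCoeff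
      ((Tab A B)^[n] (PowerSeries.mk fun i => if _ : i < n then PVaux.gfun A B d i else 0))
termination_by n => n

/-- For odd `A, B`, the parity vector map `PV_{A,B} : F₂[[q]] → ℤ₂` is a bijection and
conjugates `T_{A,B}` to the shift map `σ`. -/
theorem PV_bijective_and_conjugates_shift (A B : PowerSeries (ZMod 2))
    (hA : PowerSeries.constantCoeff A = 1)
    (hB : PowerSeries.constantCoeff B = 1) :
    Function.Bijective (PV A B) ∧ PV A B ∘ Tab A B = shiftZ ∘ PV A B := by
  have hPV : ∀ x, PV A B x
      = PVaux.Ssum (fun k => constantCoeff ((Tab A B)^[k] x)) := fun x => rfl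
  constructor
  · constructor
    · -- injectivity
      intro x y hxy
      have hs : ∀ n, constantCoeff ((Tab A B)^[n] x)
          = constantCoeff ((Tab A B)^[n] y) := by
        intro n
        have h1 := PVaux.extract (fun k => constantCoeff ((Tab A B)^[k] x)) n
        have h2 := PVaux.extract (fun k => constantCoeff ((Tab A B)^[k] y)) n
        rw [← hPV] at h1 h2
        rw [hxy] at h1
        exact h1.symm.trans h2
      by_contra hne
      have hex : ∃ n, coeff n x ≠ coeff n y := by
        by_contra hco
        push_neg at hco
        exact hne (PowerSeries.ext hco)
      have hmin := Nat.find_spec hex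
      set n := Nat.find hex with hn
      have hlt : ∀ i, i < n → coeff i (x + y) = 0 := by
        intro i hi
        have h := Nat.find_min hex hi
        push_neg at h
        rw [map_add, h, PVaux.zmod2_add_self]
      have hm := PVaux.master A B hA n x y hlt
      rw [hs n, PVaux.zmod2_add_self, map_add] at hm
      exact hmin (PVaux.zmod2_of_add_eq_zero hm.symm)
    · -- surjectivity
      intro z
      set d : ℕ → ZMod 2 := fun n => PadicInt.toZMod (shiftZ^[n] z) with hd
      refine ⟨PowerSeries.mk (PVaux.gfun A B d), ?_⟩
      have heps : ∀ n, constantCoeff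
          ((Tab A B)^[n] (PowerSeries.mk (PVaux.gfun A B d))) = d n := by
        intro n
        set y : PowerSeries (ZMod 2) :=
          PowerSeries.mk fun i => if _ : i < n then PVaux.gfun A B d i else 0 with hy
        have hlt : ∀ i, i < n →
            coeff i (PowerSeries.mk (PVaux.gfun A B d) + y) = 0 := by
          intro i hi
          rw [map_add, hy, coeff_mk, coeff_mk, dif_pos hi, PVaux.zmod2_add_self]
        have hm := PVaux.master A B hA n _ y hlt
        have hco : coeff n (PowerSeries.mk (PVaux.gfun A B d) + y)
            = PVaux.gfun A B d n := by
          rw [map_add, hy, coeff_mk, coeff_mk, dif_neg (lt_irrefl n), add_zero]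
        rw [hco, PVaux.gfun] at hm
        rw [← hy] at hm
        exact add_right_cancel hm
      rw [hPV]
      have hfe : (fun k => constantCoeff
          ((Tab A B)^[k] (PowerSeries.mk (PVaux.gfun A B d)))) = d := funext heps
      rw [hfe, hd]
      exact PVaux.Ssum_digits z
  · -- conjugacy
    funext x
    show PV A B (Tab A B x) = shiftZ (PV A B x)
    have h2 : shiftZ (PV A B x)
        = PVaux.Ssum (fun k => constantCoeff ((Tab A B)^[k+1] x)) :=
      PVaux.shiftZ_Ssum (fun k => constantCoeff ((Tab A B)^[k] x))
    rw [h2]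
    show PVaux.Ssum (fun k => constantCoeff ((Tab A B)^[k] (Tab A B x)))
        = PVaux.Ssum (fun k => constantCoeff ((Tab A B)^[k+1] x))
    congr 1
end

section
/- Let A, B ∈ F₂[[q]] be odd and let n ∈ ℕ. For all a, b ∈ F₂[[q]], the parities of T_{A,B}^k(a) and T_{A,B}^k(b) agree for every k ≤ n if and only if a ≡ b (mod q^{n+1}), i.e., if and only if q^{n+1} divides a − b. -/
open PowerSeries
open scoped Classical

lemma divq_sub (x y : PowerSeries (ZMod 2)) : divq x - divq y = divq (x - y) := by
  ext n; simp [divq]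

lemma X_mul_divq (x : PowerSeries (ZMod 2)) (h : PowerSeries.constantCoeff x = 0) :
    (X : PowerSeries (ZMod 2)) * divq x = x := by
  ext n
  cases n with
  | zero =>
    rw [PowerSeries.coeff_zero_X_mul, PowerSeries.coeff_zero_eq_constantCoeff, h]
  | succ n =>
    rw [PowerSeries.coeff_succ_X_mul]; simp [divq]

lemma zmod2_eq_of_sub (u v : ZMod 2) (h : u - v = 0) : u = v := by
  exact sub_eq_zero.mp h

lemma key (A B : PowerSeries (ZMod 2))
    (hA : PowerSeries.constantCoeff A = 1)
    (hB : PowerSeries.constantCoeff B = 1)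
    (m : ℕ) (a b : PowerSeries (ZMod 2))
    (hab : PowerSeries.constantCoeff a = PowerSeries.constantCoeff b) :
    X ^ (m + 1) ∣ Tab A B a - Tab A B b ↔ X ^ (m + 2) ∣ a - b := by
  have hXne : (X : PowerSeries (ZMod 2)) ≠ 0 := X_ne_zero
  have hdvd_ab : (X : PowerSeries (ZMod 2)) ∣ a ↔ X ∣ b := by
    rw [PowerSeries.X_dvd_iff, PowerSeries.X_dvd_iff, hab]
  have hsub0 : PowerSeries.constantCoeff (a - b) = 0 := by
    rw [map_sub, hab, sub_self]
  have hAu : IsUnit A := by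
    rw [PowerSeries.isUnit_iff_constantCoeff, hA]; exact isUnit_one
  have key' : ∀ d : PowerSeries (ZMod 2),
      PowerSeries.constantCoeff d = 0 →
      (X ^ (m + 1) ∣ divq d ↔ X ^ (m + 2) ∣ d) := by
    intro d hd
    have h2 : X ^ (m + 2) ∣ d ↔ X ^ (m + 1) ∣ divq d := by
      conv_lhs => rw [← X_mul_divq d hd]
      rw [pow_succ' (X : PowerSeries (ZMod 2)) (m + 1)]
      exact mul_dvd_mul_iff_left hXne
    exact h2.symm
  by_cases h : (X : PowerSeries (ZMod 2)) ∣ a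
  · have h' : (X : PowerSeries (ZMod 2)) ∣ b := hdvd_ab.mp h
    rw [Tab, Tab, if_pos h, if_pos h', divq_sub]
    exact key' _ hsub0
  · have h' : ¬ (X : PowerSeries (ZMod 2)) ∣ b := fun hb => h (hdvd_ab.mpr hb)
    rw [Tab, Tab, if_neg h, if_neg h', divq_sub]
    have heq : A * a + B - (A * b + B) = A * (a - b) := by ring
    rw [heq]
    have hc : PowerSeries.constantCoeff (A * (a - b)) = 0 := by
      rw [map_mul, hsub0, mul_zero]
    rw [key' _ hc]
    exact hAu.dvd_mul_left

/-- For odd `A, B` and any `a, b`, the parities of `T_{A,B}^k(a)` and `T_{A,B}^k(b)` agree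
for all `k ≤ n` if and only if `q^{n+1} ∣ a - b`. -/
theorem Tab_parity_eq_iff_dvd (A B : PowerSeries (ZMod 2))
    (hA : PowerSeries.constantCoeff A = 1)
    (hB : PowerSeries.constantCoeff B = 1)
    (n : ℕ) (a b : PowerSeries (ZMod 2)) :
    (∀ k ≤ n, PowerSeries.constantCoeff ((Tab A B)^[k] a) =
        PowerSeries.constantCoeff ((Tab A B)^[k] b)) ↔
      X ^ (n + 1) ∣ a - b := by
  induction n generalizing a b with
  | zero =>
    constructor
    · intro h
      have := h 0 le_rfl
      simp only [Function.iterate_zero, id] at this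
      rw [pow_one, PowerSeries.X_dvd_iff, map_sub, this, sub_self]
    · intro h k hk
      interval_cases k
      simp only [Function.iterate_zero, id]
      rw [pow_one, PowerSeries.X_dvd_iff, map_sub] at h
      exact sub_eq_zero.mp h
  | succ n ih =>
    constructor
    · intro h
      have h0 : PowerSeries.constantCoeff a = PowerSeries.constantCoeff b := by
        have := h 0 (Nat.zero_le _)
        simpa using this
      have h1 : X ^ (n + 1) ∣ Tab A B a - Tab A B b := by
        apply (ih (Tab A B a) (Tab A B b)).mp
        intro k hk
        have := h (k + 1) (Nat.succ_le_succ hk)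
        simpa [Function.iterate_succ_apply] using this
      exact (key A B hA hB n a b h0).mp h1
    · intro h k hk
      have h0 : PowerSeries.constantCoeff a = PowerSeries.constantCoeff b := by
        have hX : (X : PowerSeries (ZMod 2)) ∣ a - b :=
          dvd_trans (dvd_pow_self X (Nat.succ_ne_zero _)) h
        rw [PowerSeries.X_dvd_iff, map_sub] at hX
        exact sub_eq_zero.mp hX
      cases k with
      | zero => simpa using h0
      | succ k =>
        have h1 : X ^ (n + 1) ∣ Tab A B a - Tab A B b :=
          (key A B hA hB n a b h0).mpr h
        have := (ih (Tab A B a) (Tab A B b)).mpr h1 k (Nat.le_of_succ_le_succ hk)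
        simpa [Function.iterate_succ_apply] using this
end
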